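/- Every irreflexive, transitive, and proper menu-item relation R on a set 𝒜 can be extended (via Zorn's Lemma) to an irreflexive, transitive, and proper menu-item relation R⁺ such that for all distinct x, y ∈ 𝒜, either {x} R⁺ y or {y} R⁺ x, and moreover for every finite X and every y, X R y implies there exists x ∈ X with {x} R⁺ y. -/

import Mathlib

open Finset

/-- A menu-item relation is proper if `X R x` implies `X ≠ ∅`. -/
def MProper {α : Type*} (R : Finset α → α → Prop) : Prop :=
  ∀ X x, R X x → X ≠ ∅

/-- A menu-item relation is irreflexive if `X R x` implies `x ∉ X`. -/
def MIrrefl {α : Type*} (R : Finset α → α → Prop) : Prop :=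
  ∀ X x, R X x → x ∉ X

/-- Transitivity for menu-item relations. -/
def MTrans {α : Type*} [DecidableEq α] (R : Finset α → α → Prop) : Prop :=
  ∀ X x Y y, R X x → R Y y → x ∈ Y → R ((X ∪ Y) \ {x, y}) y

/-- The transitive closure of a menu-item relation: the smallest transitive
menu-item relation containing it. -/
def MTransClosure {α : Type*} [DecidableEq α] (R : Finset α → α → Prop) :
    Finset α → α → Prop :=
  fun X x => ∀ S : Finset α → α → Prop, MTrans S → (∀ Y y, R Y y → S Y y) → S X x

section Aux

variable {α : Type*} [DecidableEq α]

lemma tc_base (R : Finset α → α → Prop) {Z : Finset α} {z : α} (h : R Z z) :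
    MTransClosure R Z z := fun _ _ hS => hS Z z h

lemma tc_trans (R : Finset α → α → Prop) : MTrans (MTransClosure R) :=
  fun X x Y y hX hY hxY S hS hRS => hS X x Y y (hX S hS hRS) (hY S hS hRS) hxY

lemma tc_min {R S : Finset α → α → Prop} (hS : MTrans S) (h : ∀ Y y, R Y y → S Y y) :
    ∀ Z z, MTransClosure R Z z → S Z z := fun _ _ hZ => hZ S hS h

lemma tc_mono {R R' : Finset α → α → Prop} (h : ∀ Y y, R Y y → R' Y y) :
    ∀ Z z, MTransClosure R Z z → MTransClosure R' Z z :=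
  tc_min (tc_trans R') (fun Y y hY => tc_base R' (h Y y hY))

lemma sing_no2 {M : Finset α → α → Prop} (hTr : MTrans M) (hPr : MProper M)
    {a b : α} (h1 : M {a} b) (h2 : M {b} a) : False := by
  have h := hTr {a} b {b} a h1 h2 (mem_singleton_self b)
  have he : (({a} ∪ {b}) \ {b, a} : Finset α) = ∅ := by
    ext u; simp only [mem_sdiff, mem_union, mem_singleton, mem_insert, notMem_empty]
    tauto
  rw [he] at h
  exact hPr _ _ h rfl

lemma sing_trans {M : Finset α → α → Prop} (hIrr : MIrrefl M) (hTr : MTrans M)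
    (hPr : MProper M) {a b c : α} (h1 : M {a} b) (h2 : M {b} c) : M {a} c := by
  by_cases hac : a = c
  · subst hac; exact (sing_no2 hTr hPr h1 h2).elim
  · have h := hTr {a} b {b} c h1 h2 (mem_singleton_self b)
    have hab : a ≠ b := fun h' => hIrr {a} b h1 (by simp [h'])
    have hbc : b ≠ c := fun h' => hIrr {b} c h2 (by simp [h'])
    have he : (({a} ∪ {b}) \ {b, c} : Finset α) = {a} := by
      ext u
      simp only [mem_sdiff, mem_union, mem_singleton, mem_insert]
      constructor
      · rintro ⟨rfl | rfl, hn⟩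
        · rfl
        · exact absurd (Or.inl rfl) hn
      · rintro rfl
        exact ⟨Or.inl rfl, by rintro (rfl | rfl); exacts [hab rfl, hac rfl]⟩
    rwa [he] at h

/-- the erased relation after removing a sink `m`. -/
def eraseRel (M : Finset α → α → Prop) (m : α) : Finset α → α → Prop :=
  fun Z z => z ≠ m ∧ ∃ Z₀, M Z₀ z ∧ Z = Z₀.erase m

lemma eraseRel_props {β : Finset α} {M : Finset α → α → Prop} {m : α}
    (hIrr : MIrrefl M) (hTr : MTrans M) (hPr : MProper M)
    (hSupp : ∀ Z z, M Z z → Z ⊆ β ∧ z ∈ β)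
    (hsink : ∀ z, ¬ M {m} z) :
    MIrrefl (eraseRel M m) ∧ MTrans (eraseRel M m) ∧ MProper (eraseRel M m) ∧
      (∀ Z z, eraseRel M m Z z → Z ⊆ β.erase m ∧ z ∈ β.erase m) := by
  refine ⟨?_, ?_, ?_, ?_⟩
  · rintro Z z ⟨hzm, Z₀, hM, rfl⟩ hz
    exact hIrr _ _ hM (mem_of_mem_erase hz)
  · rintro Z₁ z₁ Z₂ z₂ ⟨hz₁m, Z₁₀, hM₁, rfl⟩ ⟨hz₂m, Z₂₀, hM₂, rfl⟩ hz₁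
    have hz₁' : z₁ ∈ Z₂₀ := mem_of_mem_erase hz₁
    refine ⟨hz₂m, (Z₁₀ ∪ Z₂₀) \ {z₁, z₂}, hTr _ _ _ _ hM₁ hM₂ hz₁', ?_⟩
    ext u
    simp only [mem_sdiff, mem_union, mem_erase, mem_insert, mem_singleton]
    tauto
  · rintro Z z ⟨hzm, Z₀, hM, rfl⟩ hZ
    rcases (erase_eq_empty_iff Z₀ m).mp hZ with rfl | rfl
    · exact hPr _ _ hM rfl
    · exact hsink z hM
  · rintro Z z ⟨hzm, Z₀, hM, rfl⟩
    exact ⟨erase_subset_erase m (hSupp _ _ hM).1, mem_erase.mpr ⟨hzm, (hSupp _ _ hM).2⟩⟩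

/-- Existence of a "sink" (no outgoing singleton fact) within a given nonempty candidate set,
all of whose elements are closed under singleton-steps. -/
lemma exists_sink {β : Finset α} {M : Finset α → α → Prop}
    (hIrr : MIrrefl M) (hTr : MTrans M) (hPr : MProper M)
    (hSupp : ∀ Z z, M Z z → Z ⊆ β ∧ z ∈ β)
    {U : Finset α} (hUβ : U ⊆ β) (hU : U.Nonempty)
    (hUcl : ∀ a b, a ∈ U → M {a} b → b ∈ U) :
    ∃ m ∈ U, ∀ z, ¬ M {m} z := by
  classical
  obtain ⟨m, hm, hmin⟩ :=
    U.exists_min_image (fun c => (β.filter (fun d => M {c} d)).card) hU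
  refine ⟨m, hm, fun z hz => ?_⟩
  have hzU : z ∈ U := hUcl m z hm hz
  have hlt : (β.filter (fun d => M {z} d)).card < (β.filter (fun d => M {m} d)).card := by
    apply card_lt_card
    constructor
    · intro d hd
      rw [mem_filter] at hd ⊢
      exact ⟨hd.1, sing_trans hIrr hTr hPr hz hd.2⟩
    · intro hsub
      have hzmem : z ∈ β.filter (fun d => M {m} d) :=
        mem_filter.mpr ⟨hUβ hzU, hz⟩
      have := hsub hzmem
      rw [mem_filter] at this
      exact hIrr _ _ this.2 (mem_singleton_self z)
  exact absurd (hmin z hzU) (not_le.mpr hlt)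

/-- Extend an order on `β.erase m` (good for `eraseRel M m`) by putting `m` at the bottom. -/
lemma extendT {β : Finset α} {M : Finset α → α → Prop} {m : α}
    (hIrr : MIrrefl M) (hPr : MProper M)
    (hSupp : ∀ Z z, M Z z → Z ⊆ β ∧ z ∈ β)
    (hm : m ∈ β)
    {T' : α → α → Prop}
    (hT'tr : ∀ a b c, T' a b → T' b c → T' a c)
    (hT'ir : ∀ a, ¬ T' a a)
    (hT'supp : ∀ a b, T' a b → a ∈ β.erase m ∧ b ∈ β.erase m)
    (hT'wit : ∀ Z z, eraseRel M m Z z → ∃ c ∈ Z, T' c z) :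
    ∃ T : α → α → Prop,
      (∀ a b c, T a b → T b c → T a c) ∧ (∀ a, ¬ T a a) ∧
      (∀ a b, T a b → a ∈ β ∧ b ∈ β) ∧
      (∀ Z z, M Z z → ∃ c ∈ Z, T c z) ∧
      (∀ a b, T' a b → T a b) ∧ (∀ a, a ∈ β.erase m → T a m) := by
  refine ⟨fun a b => T' a b ∨ (b = m ∧ a ∈ β.erase m), ?_, ?_, ?_, ?_, ?_, ?_⟩
  · rintro a b c (hab | ⟨rfl, ha⟩) (hbc | ⟨rfl, hb⟩)
    · exact Or.inl (hT'tr _ _ _ hab hbc)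
    · exact Or.inr ⟨rfl, (hT'supp _ _ hab).1⟩
    · exact absurd (hT'supp _ _ hbc).1 (notMem_erase _ _)
    · exact absurd hb (notMem_erase _ _)
  · rintro a (ha | ⟨rfl, ha⟩)
    · exact hT'ir a ha
    · exact notMem_erase _ _ ha
  · rintro a b (hab | ⟨rfl, ha⟩)
    · exact ⟨mem_of_mem_erase (hT'supp _ _ hab).1, mem_of_mem_erase (hT'supp _ _ hab).2⟩
    · exact ⟨mem_of_mem_erase ha, hm⟩
  · intro Z z hZ
    by_cases hzm : z = m
    · obtain ⟨a, ha⟩ := nonempty_iff_ne_empty.mpr (hPr _ _ hZ)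
      have hzZ := hIrr _ _ hZ
      have ham : a ≠ m := fun h => hzZ (by rw [hzm, ← h]; exact ha)
      exact ⟨a, ha, Or.inr ⟨hzm, mem_erase.mpr ⟨ham, (hSupp _ _ hZ).1 ha⟩⟩⟩
    · obtain ⟨c, hc, hcT⟩ := hT'wit (Z.erase m) z ⟨hzm, Z, hZ, rfl⟩
      exact ⟨c, mem_of_mem_erase hc, Or.inl hcT⟩
  · exact fun a b h => Or.inl h
  · exact fun a ha => Or.inr ⟨rfl, ha⟩

/-- Finite theorem: every finite irr/trans/proper menu-item relation admits a
strict partial order with the witness property. -/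
lemma finThm : ∀ (n : ℕ) (β : Finset α) (M : Finset α → α → Prop),
    β.card ≤ n → MIrrefl M → MTrans M → MProper M →
    (∀ Z z, M Z z → Z ⊆ β ∧ z ∈ β) →
    ∃ T : α → α → Prop,
      (∀ a b c, T a b → T b c → T a c) ∧ (∀ a, ¬ T a a) ∧
      (∀ a b, T a b → a ∈ β ∧ b ∈ β) ∧
      (∀ Z z, M Z z → ∃ c ∈ Z, T c z) := by
  intro n
  induction n with
  | zero =>
    intro β M hcard hIrr hTr hPr hSupp
    refine ⟨fun _ _ => False, by tauto, by tauto, by tauto, ?_⟩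
    intro Z z hZ
    have hβ : β = ∅ := card_eq_zero.mp (Nat.le_zero.mp hcard)
    exact absurd (hβ ▸ (hSupp _ _ hZ).2) (notMem_empty z)
  | succ n ih =>
    intro β M hcard hIrr hTr hPr hSupp
    rcases eq_empty_or_nonempty β with rfl | hβ
    · refine ⟨fun _ _ => False, by tauto, by tauto, by tauto, ?_⟩
      intro Z z hZ
      exact absurd (hSupp _ _ hZ).2 (notMem_empty z)
    · obtain ⟨m, hm, hsink⟩ :=
        exists_sink hIrr hTr hPr hSupp (Subset.refl β) hβ
          (fun a b _ h => (hSupp _ _ h).2)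
      obtain ⟨hIrr', hTr', hPr', hSupp'⟩ := eraseRel_props hIrr hTr hPr hSupp hsink
      have hc' : (β.erase m).card ≤ n := by
        rw [card_erase_of_mem hm]
        omega
      obtain ⟨T', h1, h2, h3, h4⟩ := ih (β.erase m) (eraseRel M m) hc' hIrr' hTr' hPr' hSupp'
      obtain ⟨T, k1, k2, k3, k4, _, _⟩ := extendT hIrr hPr hSupp hm h1 h2 h3 h4
      exact ⟨T, k1, k2, k3, k4⟩

/-- Finite theorem, strengthened: can additionally require `T x y` provided `¬ M {y} x`. -/
lemma finThmP : ∀ (n : ℕ) (β : Finset α) (M : Finset α → α → Prop) (x y : α),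
    β.card ≤ n → MIrrefl M → MTrans M → MProper M →
    (∀ Z z, M Z z → Z ⊆ β ∧ z ∈ β) →
    x ∈ β → y ∈ β → x ≠ y → ¬ M {y} x →
    ∃ T : α → α → Prop,
      (∀ a b c, T a b → T b c → T a c) ∧ (∀ a, ¬ T a a) ∧
      (∀ a b, T a b → a ∈ β ∧ b ∈ β) ∧
      (∀ Z z, M Z z → ∃ c ∈ Z, T c z) ∧ T x y := by
  intro n
  induction n with
  | zero =>
    intro β M x y hcard _ _ _ _ hx _ _ _
    have hβ : β = ∅ := card_eq_zero.mp (Nat.le_zero.mp hcard)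
    exact absurd (hβ ▸ hx) (notMem_empty x)
  | succ n ih =>
    intro β M x y hcard hIrr hTr hPr hSupp hx hy hxy hyx
    classical
    by_cases hA : ∀ z, ¬ M {y} z
    · -- Case A : y is a sink; put it at the bottom.
      obtain ⟨hIrr', hTr', hPr', hSupp'⟩ := eraseRel_props hIrr hTr hPr hSupp hA
      obtain ⟨T', h1, h2, h3, h4⟩ :=
        finThm (β.erase y).card (β.erase y) (eraseRel M y) le_rfl hIrr' hTr' hPr' hSupp'
      obtain ⟨T, k1, k2, k3, k4, _, k6⟩ := extendT hIrr hPr hSupp hy h1 h2 h3 h4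
      exact ⟨T, k1, k2, k3, k4, k6 x (mem_erase.mpr ⟨hxy, hx⟩)⟩
    · -- Case B : y has an outgoing singleton fact; find a sink reachable from y.
      push_neg at hA
      obtain ⟨z₀, hz₀⟩ := hA
      have hUcl : ∀ a b, a ∈ β.filter (fun d => M {y} d) → M {a} b →
          b ∈ β.filter (fun d => M {y} d) := by
        intro a b ha hab
        rw [mem_filter] at ha ⊢
        exact ⟨(hSupp _ _ hab).2, sing_trans hIrr hTr hPr ha.2 hab⟩
      obtain ⟨m, hmU, hsink⟩ :=
        exists_sink hIrr hTr hPr hSupp (filter_subset _ _)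
          ⟨z₀, mem_filter.mpr ⟨(hSupp _ _ hz₀).2, hz₀⟩⟩ hUcl
      rw [mem_filter] at hmU
      obtain ⟨hmβ, hym⟩ := hmU
      have hmy : m ≠ y := fun h => hIrr _ _ hym (by simp [h])
      have hmx : m ≠ x := fun h => hyx (h ▸ hym)
      obtain ⟨hIrr', hTr', hPr', hSupp'⟩ := eraseRel_props hIrr hTr hPr hSupp hsink
      have hc' : (β.erase m).card ≤ n := by
        rw [card_erase_of_mem hmβ]
        have : 1 ≤ β.card := card_pos.mpr ⟨m, hmβ⟩
        omega
      have hyx' : ¬ eraseRel M m {y} x := by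
        rintro ⟨hxm, Z₀, hM₀, hEq⟩
        have hyZ₀ : y ∈ Z₀ := mem_of_mem_erase (hEq ▸ mem_singleton_self y)
        have hZ₀sub : Z₀ ⊆ {y, m} := by
          intro u hu
          by_cases hum : u = m
          · simp [hum]
          · have : u ∈ Z₀.erase m := mem_erase.mpr ⟨hum, hu⟩
            rw [← hEq] at this
            simp only [mem_singleton] at this
            simp [this]
        by_cases hmZ₀ : m ∈ Z₀
        · have h := hTr {y} m Z₀ x hym hM₀ hmZ₀
          have he : (({y} ∪ Z₀) \ {m, x} : Finset α) = {y} := by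
            ext u
            simp only [mem_sdiff, mem_union, mem_singleton, mem_insert]
            constructor
            · rintro ⟨rfl | hu, hn⟩
              · rfl
              · rcases mem_insert.mp (hZ₀sub hu) with h' | h'
                · exact h'
                · rw [mem_singleton] at h'
                  exact absurd (Or.inl h') hn
            · rintro rfl
              exact ⟨Or.inl rfl, by rintro (rfl | rfl); exacts [hmy rfl, hxy rfl]⟩
          rw [he] at h
          exact hyx h
        · have hZy : Z₀ = {y} := (hEq.trans (erase_eq_of_notMem hmZ₀)).symm
          exact hyx (hZy ▸ hM₀)
      obtain ⟨T', h1, h2, h3, h4, hTxy⟩ :=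
        ih (β.erase m) (eraseRel M m) x y hc' hIrr' hTr' hPr' hSupp'
          (mem_erase.mpr ⟨fun h => hmx h.symm, hx⟩)
          (mem_erase.mpr ⟨fun h => hmy h.symm, hy⟩) hxy hyx'
      obtain ⟨T, k1, k2, k3, k4, k5, _⟩ := extendT hIrr hPr hSupp hmβ h1 h2 h3 h4
      exact ⟨T, k1, k2, k3, k4, k5 x y hTxy⟩

/-- adding the pair `({x}, y)` to a relation. -/
def addPair (M : Finset α → α → Prop) (x y : α) : Finset α → α → Prop :=
  fun Z z => M Z z ∨ (Z = {x} ∧ z = y)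

/-- restriction of a relation to a finite universe. -/
def restr (M : Finset α → α → Prop) (β : Finset α) : Finset α → α → Prop :=
  fun Z z => M Z z ∧ Z ⊆ β ∧ z ∈ β

lemma restr_props {M : Finset α → α → Prop} (β : Finset α)
    (hIrr : MIrrefl M) (hTr : MTrans M) (hPr : MProper M) :
    MIrrefl (restr M β) ∧ MTrans (restr M β) ∧ MProper (restr M β) ∧
      (∀ Z z, restr M β Z z → Z ⊆ β ∧ z ∈ β) := by
  refine ⟨fun Z z h => hIrr Z z h.1, ?_, fun Z z h => hPr Z z h.1, fun Z z h => h.2⟩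
  rintro Z₁ z₁ Z₂ z₂ ⟨h₁, hs₁, hz₁⟩ ⟨h₂, hs₂, hz₂⟩ hmem
  exact ⟨hTr _ _ _ _ h₁ h₂ hmem, (sdiff_subset).trans (union_subset hs₁ hs₂), hz₂⟩

/-- every fact in the closure of `M + (x,y)` has a finite support. -/
lemma tc_support {M : Finset α → α → Prop} (x y : α) :
    ∀ Z z, MTransClosure (addPair M x y) Z z →
      ∃ β : Finset α, x ∈ β ∧ y ∈ β ∧ Z ⊆ β ∧ z ∈ β ∧
        MTransClosure (addPair (restr M β) x y) Z z := by
  apply tc_min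
  · rintro Z₁ z₁ Z₂ z₂ ⟨β₁, hx₁, hy₁, hZ₁, hz₁, h₁⟩ ⟨β₂, hx₂, hy₂, hZ₂, hz₂, h₂⟩ hmem
    refine ⟨β₁ ∪ β₂, mem_union_left _ hx₁, mem_union_left _ hy₁,
      (sdiff_subset).trans (union_subset (hZ₁.trans subset_union_left)
        (hZ₂.trans subset_union_right)), mem_union_right _ hz₂, ?_⟩
    have lift : ∀ (β : Finset α), β ⊆ β₁ ∪ β₂ → ∀ Z z,
        MTransClosure (addPair (restr M β) x y) Z z →
        MTransClosure (addPair (restr M (β₁ ∪ β₂)) x y) Z z := by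
      intro β hβ
      apply tc_mono
      rintro Y u (⟨hM, hs, hu⟩ | hp)
      · exact Or.inl ⟨hM, hs.trans hβ, hβ hu⟩
      · exact Or.inr hp
    exact tc_trans _ _ _ _ _ (lift β₁ subset_union_left _ _ h₁)
      (lift β₂ subset_union_right _ _ h₂) hmem
  · rintro Z z (hM | ⟨rfl, rfl⟩)
    · refine ⟨insert x (insert y (insert z Z)), by simp, by simp, ?_, by simp, ?_⟩
      · intro u hu; simp [hu]
      · exact tc_base _ (Or.inl ⟨hM, fun u hu => by simp [hu], by simp⟩)
    · refine ⟨insert x (singleton z), by simp, by simp, ?_, by simp,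
        tc_base _ (Or.inr ⟨rfl, rfl⟩)⟩
      exact singleton_subset_iff.mpr (by simp)

/-- model lemma: a strict order with the witness property for the base relation
has it for the whole transitive closure. -/
lemma tc_model {B : Finset α → α → Prop} {T : α → α → Prop}
    (hTtr : ∀ a b c, T a b → T b c → T a c) (hTir : ∀ a, ¬ T a a)
    (hwit : ∀ Z z, B Z z → ∃ c ∈ Z, T c z) :
    ∀ Z z, MTransClosure B Z z → ∃ c ∈ Z, T c z := by
  apply tc_min _ hwit
  rintro Z₁ z₁ Z₂ z₂ ⟨c₁, hc₁, hT₁⟩ ⟨c₂, hc₂, hT₂⟩ hmem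
  by_cases hc : c₂ = z₁
  · subst hc
    refine ⟨c₁, ?_, hTtr _ _ _ hT₁ hT₂⟩
    have h1 : c₁ ≠ c₂ := fun h => hTir _ (h ▸ hT₁)
    have h2 : c₁ ≠ z₂ := fun h => hTir _ (h ▸ hTtr _ _ _ hT₁ hT₂)
    simp only [mem_sdiff, mem_union, mem_insert, mem_singleton]
    exact ⟨Or.inl hc₁, by rintro (h | h); exacts [h1 h, h2 h]⟩
  · have h2 : c₂ ≠ z₂ := fun h => hTir _ (h ▸ hT₂)
    refine ⟨c₂, ?_, hT₂⟩
    simp only [mem_sdiff, mem_union, mem_insert, mem_singleton]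
    exact ⟨Or.inr hc₂, by rintro (h | h); exacts [hc h, h2 h]⟩

/-- The key closure lemma: adjoining a single pair `({x}, y)` with `¬ M {y} x`
to an irreflexive, transitive, proper relation and taking the transitive
closure preserves irreflexivity and properness. -/
lemma closure_lemma {M : Finset α → α → Prop}
    (hIrr : MIrrefl M) (hTr : MTrans M) (hPr : MProper M)
    {x y : α} (hxy : x ≠ y) (hyx : ¬ M {y} x) :
    MIrrefl (MTransClosure (addPair M x y)) ∧ MProper (MTransClosure (addPair M x y)) := by
  set N := MTransClosure (addPair M x y) with hN
  have hNIrr : MIrrefl N := by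
    have : ∀ Z z, N Z z → N Z z ∧ z ∉ Z := by
      apply tc_min
      · rintro Z₁ z₁ Z₂ z₂ ⟨hN₁, hi₁⟩ ⟨hN₂, hi₂⟩ hmem
        refine ⟨tc_trans _ _ _ _ _ hN₁ hN₂ hmem, ?_⟩
        simp
      · rintro Z z (hM | ⟨rfl, rfl⟩)
        · exact ⟨tc_base _ (Or.inl hM), hIrr _ _ hM⟩
        · exact ⟨tc_base _ (Or.inr ⟨rfl, rfl⟩), by simp [Ne.symm hxy]⟩
    exact fun Z z h => (this Z z h).2
  have hKey : ∀ a b, N {a} b → N {b} a → False := by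
    intro a b hab hba
    obtain ⟨β₁, hx₁, hy₁, _, _, h₁⟩ := tc_support x y _ _ hab
    obtain ⟨β₂, hx₂, hy₂, _, _, h₂⟩ := tc_support x y _ _ hba
    set β := β₁ ∪ β₂ with hβ
    have lift : ∀ (γ : Finset α), γ ⊆ β → ∀ Z z,
        MTransClosure (addPair (restr M γ) x y) Z z →
        MTransClosure (addPair (restr M β) x y) Z z := by
      intro γ hγ
      apply tc_mono
      rintro Y u (⟨hM, hs, hu⟩ | hp)
      · exact Or.inl ⟨hM, hs.trans hγ, hγ hu⟩
      · exact Or.inr hp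
    have h₁' := lift β₁ subset_union_left _ _ h₁
    have h₂' := lift β₂ subset_union_right _ _ h₂
    obtain ⟨hIrrβ, hTrβ, hPrβ, hSuppβ⟩ := restr_props (M := M) β hIrr hTr hPr
    obtain ⟨T, hTtr, hTir, _, hTwit, hTxy⟩ :=
      finThmP β.card β (restr M β) x y le_rfl hIrrβ hTrβ hPrβ hSuppβ
        (mem_union_left _ hx₁) (mem_union_left _ hy₁) hxy (fun h => hyx h.1)
    have hmodel : ∀ Z z, MTransClosure (addPair (restr M β) x y) Z z →
        ∃ c ∈ Z, T c z := by
      apply tc_model hTtr hTir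
      rintro Z z (hM | ⟨rfl, rfl⟩)
      · exact hTwit _ _ hM
      · exact ⟨x, mem_singleton_self x, hTxy⟩
    obtain ⟨c, hc, hTc⟩ := hmodel _ _ h₁'
    obtain ⟨d, hd, hTd⟩ := hmodel _ _ h₂'
    rw [mem_singleton] at hc hd
    subst hc; subst hd
    exact hTir _ (hTtr _ _ _ hTc hTd)
  have hNPr : MProper N := by
    have : ∀ Z z, N Z z → N Z z ∧ Z ≠ ∅ := by
      apply tc_min
      · rintro Z₁ z₁ Z₂ z₂ ⟨hN₁, hne₁⟩ ⟨hN₂, hne₂⟩ hmem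
        refine ⟨tc_trans _ _ _ _ _ hN₁ hN₂ hmem, ?_⟩
        intro hemp
        have hi₁ := hNIrr _ _ hN₁
        have hi₂ := hNIrr _ _ hN₂
        have hZ₁ : Z₁ = {z₂} := by
          rcases subset_singleton_iff.mp (fun u hu => by
            have : u ∉ (Z₁ ∪ Z₂) \ ({z₁, z₂} : Finset α) := hemp ▸ notMem_empty u
            simp only [mem_sdiff, mem_union, mem_insert, mem_singleton, not_and, not_not] at this
            rcases this (Or.inl hu) with rfl | rfl
            · exact absurd hu hi₁
            · exact mem_singleton_self _) with h | h
          · exact absurd h hne₁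
          · exact h
        have hZ₂ : Z₂ = {z₁} := by
          rcases subset_singleton_iff.mp (fun u hu => by
            have : u ∉ (Z₁ ∪ Z₂) \ ({z₁, z₂} : Finset α) := hemp ▸ notMem_empty u
            simp only [mem_sdiff, mem_union, mem_insert, mem_singleton, not_and, not_not] at this
            rcases this (Or.inr hu) with rfl | rfl
            · exact mem_singleton_self _
            · exact absurd hu hi₂) with h | h
          · exact absurd h hne₂
          · exact h
        exact hKey z₂ z₁ (hZ₁ ▸ hN₁) (hZ₂ ▸ hN₂)
      · rintro Z z (hM | ⟨rfl, rfl⟩)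
        · exact ⟨tc_base _ (Or.inl hM), hPr _ _ hM⟩
        · exact ⟨tc_base _ (Or.inr ⟨rfl, rfl⟩), singleton_ne_empty x⟩
    exact fun Z z h => (this Z z h).2
  exact ⟨hNIrr, hNPr⟩

lemma descend {M : Finset α → α → Prop} (hIrr : MIrrefl M) (hTr : MTrans M) (hPr : MProper M) :
    ∀ (n : ℕ) (Z : Finset α) (z : α), Z.card ≤ n → M Z z → (∀ a ∈ Z, M (singleton z) a) → False := by
  intro n
  induction n with
  | zero =>
    intro Z z hc hM _
    exact hPr _ _ hM (card_eq_zero.mp (Nat.le_zero.mp hc))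
  | succ n ih =>
    intro Z z hc hM hall
    obtain ⟨a, ha⟩ := nonempty_iff_ne_empty.mpr (hPr _ _ hM)
    have hzZ := hIrr _ _ hM
    have h1 := hTr Z z (singleton z) a hM (hall a ha) (mem_singleton_self z)
    have e1 : (Z ∪ singleton z) \ insert z (singleton a) = Z.erase a := by
      ext u
      simp only [mem_sdiff, mem_union, mem_singleton, mem_insert, mem_erase]
      constructor
      · rintro ⟨hu | rfl, hn⟩
        · exact ⟨fun h => hn (Or.inr h), hu⟩
        · exact absurd (Or.inl rfl) hn
      · rintro ⟨hua, hu⟩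
        exact ⟨Or.inl hu, by rintro (rfl | rfl); exacts [hzZ hu, hua rfl]⟩
    rw [show ({z, a} : Finset α) = insert z (singleton a) from rfl] at h1
    rw [e1] at h1
    have h2 := hTr (Z.erase a) a Z z h1 hM ha
    have e2 : (Z.erase a ∪ Z) \ insert a (singleton z) = Z.erase a := by
      ext u
      simp only [mem_sdiff, mem_union, mem_erase, mem_insert, mem_singleton]
      constructor
      · rintro ⟨hu, hn⟩
        have huZ : u ∈ Z := by rcases hu with h | h; exacts [h.2, h]
        exact ⟨fun h => hn (Or.inl h), huZ⟩
      · rintro ⟨hua, hu⟩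
        exact ⟨Or.inr hu, by rintro (rfl | rfl); exacts [hua rfl, hzZ hu]⟩
    rw [show ({a, z} : Finset α) = insert a (singleton z) from rfl] at h2
    rw [e2] at h2
    have hcard : (Z.erase a).card ≤ n := by
      rw [card_erase_of_mem ha]
      have : 1 ≤ Z.card := card_pos.mpr ⟨a, ha⟩
      omega
    exact ih (Z.erase a) z hcard h2 (fun b hb => hall b (mem_of_mem_erase hb))

end Aux

theorem menuRel_extension_proof {α : Type*} [DecidableEq α]
    (R : Finset α → α → Prop)
    (hIrr : MIrrefl R) (hTr : MTrans R) (hPr : MProper R) :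
    ∃ Rp : Finset α → α → Prop,
      MIrrefl Rp ∧ MTrans Rp ∧ MProper Rp ∧
      (∀ X x, R X x → Rp X x) ∧
      (∀ x y : α, x ≠ y → Rp {x} y ∨ Rp {y} x) ∧
      (∀ (X : Finset α) (y : α), R X y → ∃ x ∈ X, Rp {x} y) := by
  classical
  set 𝒮 : Set (Set (Finset α × α)) :=
    {V | MIrrefl (fun Z z => (Z, z) ∈ V) ∧ MTrans (fun Z z => (Z, z) ∈ V) ∧
         MProper (fun Z z => (Z, z) ∈ V) ∧ ∀ Z z, R Z z → (Z, z) ∈ V} with h𝒮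
  have hR₀ : {q : Finset α × α | R q.1 q.2} ∈ 𝒮 := ⟨hIrr, hTr, hPr, fun Z z h => h⟩
  have hchain : ∀ c ⊆ 𝒮, IsChain (· ⊆ ·) c → c.Nonempty →
      ∃ ub ∈ 𝒮, ∀ s ∈ c, s ⊆ ub := by
    rintro c hc𝒮 hch ⟨V₀, hV₀⟩
    refine ⟨⋃₀ c, ⟨?_, ?_, ?_, ?_⟩, fun s hs => Set.subset_sUnion_of_mem hs⟩
    · rintro Z z ⟨W, hW, hZW⟩
      exact (hc𝒮 hW).1 _ _ hZW
    · rintro Z₁ z₁ Z₂ z₂ ⟨W₁, hW₁, h₁⟩ ⟨W₂, hW₂, h₂⟩ hmem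
      rcases hch.total hW₁ hW₂ with hsub | hsub
      · exact ⟨W₂, hW₂, (hc𝒮 hW₂).2.1 _ _ _ _ (hsub h₁) h₂ hmem⟩
      · exact ⟨W₁, hW₁, (hc𝒮 hW₁).2.1 _ _ _ _ h₁ (hsub h₂) hmem⟩
    · rintro Z z ⟨W, hW, hZW⟩
      exact (hc𝒮 hW).2.2.1 _ _ hZW
    · intro Z z h
      exact ⟨V₀, hV₀, (hc𝒮 hV₀).2.2.2 Z z h⟩
  obtain ⟨V, _, hVmax⟩ := zorn_subset_nonempty 𝒮 hchain _ hR₀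
  obtain ⟨hMIrr, hMTr, hMPr, hMR⟩ := hVmax.prop
  have htot : ∀ x y : α, x ≠ y → (singleton x, y) ∈ V ∨ (singleton y, x) ∈ V := by
    intro x y hxy
    by_contra hcon
    push_neg at hcon
    obtain ⟨hnxy, hnyx⟩ := hcon
    obtain ⟨hNIrr, hNPr⟩ :=
      closure_lemma (M := fun Z z => (Z, z) ∈ V) hMIrr hMTr hMPr hxy hnyx
    have hV'𝒮 : {q : Finset α × α |
        MTransClosure (addPair (fun Z z => (Z, z) ∈ V) x y) q.1 q.2} ∈ 𝒮 := by
      refine ⟨hNIrr, ?_, hNPr, fun Z z h => tc_base _ (Or.inl (hMR Z z h))⟩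
      intro X a Y b h1 h2 hm
      exact tc_trans _ _ _ _ _ h1 h2 hm
    have hVV' : V ⊆ {q : Finset α × α |
        MTransClosure (addPair (fun Z z => (Z, z) ∈ V) x y) q.1 q.2} :=
      fun q hq => tc_base _ (Or.inl hq)
    have hx'y : (singleton x, y) ∈ {q : Finset α × α |
        MTransClosure (addPair (fun Z z => (Z, z) ∈ V) x y) q.1 q.2} :=
      tc_base _ (Or.inr ⟨rfl, rfl⟩)
    exact hnxy (hVmax.2 hV'𝒮 hVV' hx'y)
  refine ⟨fun Z z => (Z, z) ∈ V, hMIrr, hMTr, hMPr, hMR, ?_, ?_⟩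
  · intro x y hxy
    exact htot x y hxy
  · intro X y' hXy'
    by_contra hcon
    push_neg at hcon
    have hMX : (X, y') ∈ V := hMR X y' hXy'
    have hy'X : y' ∉ X := hMIrr _ _ hMX
    have hall : ∀ a ∈ X, (singleton y', a) ∈ V := by
      intro a ha
      have hay' : a ≠ y' := fun h => hy'X (h ▸ ha)
      rcases htot a y' hay' with h | h
      · exact absurd h (hcon a ha)
      · exact h
    exact descend hMIrr hMTr hMPr X.card X y' le_rfl hMX hall

/-- Szpilrajn-type extension of menu-item relations. -/
theorem menuRel_extension {α : Type*} [DecidableEq α]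
    (R : Finset α → α → Prop)
    (hIrr : MIrrefl R) (hTr : MTrans R) (hPr : MProper R) :
    ∃ Rp : Finset α → α → Prop,
      MIrrefl Rp ∧ MTrans Rp ∧ MProper Rp ∧
      (∀ X x, R X x → Rp X x) ∧
      (∀ x y : α, x ≠ y → Rp {x} y ∨ Rp {y} x) ∧
      (∀ (X : Finset α) (y : α), R X y → ∃ x ∈ X, Rp {x} y) :=
  menuRel_extension_proof R hIrr hTr hPr
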